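/- Let N = N(s_0 | a_1/b_1, …, a_m/b_m) be an n×n star-shaped intersection matrix built from an integer s_0 ≥ 1 and m ≥ 3 Hirzebruch–Jung chain matrices N_1, …, N_m with associated data (a_j, b_j, R_j). Let p ≥ 2 be an integer. If a_j = p for all j = 1, …, m and p·s_0 − Σ_{j=1}^m b_j = 1, then the discriminant group Φ_N is killed by p and has order p^{m−1}. -/

import Mathlib

open Matrix BigOperators

/-- Downward determinacy for a three-term recurrence on a chain. -/
lemma star_chain_det {K : Type*} [CommRing K] (L : ℕ) (d : ℕ → K) (w z : Fin (L+1) → K)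
    (hw : ∀ k, 1 ≤ k → ∀ h2 : k ≤ L,
      w ⟨k-1, by omega⟩ = - d k * w ⟨k, by omega⟩ -
        (if h' : k+1 ≤ L then w ⟨k+1, by omega⟩ else 0))
    (hz : ∀ k, 1 ≤ k → ∀ h2 : k ≤ L,
      z ⟨k-1, by omega⟩ = - d k * z ⟨k, by omega⟩ -
        (if h' : k+1 ≤ L then z ⟨k+1, by omega⟩ else 0))
    (hzl : z ⟨L, by omega⟩ = 1) :
    ∀ k (hk : k ≤ L), w ⟨k, by omega⟩ = w ⟨L, by omega⟩ * z ⟨k, by omega⟩ := by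
  suffices H : ∀ t k (hk : k ≤ L), L - k = t →
      w ⟨k, by omega⟩ = w ⟨L, by omega⟩ * z ⟨k, by omega⟩ by
    intro k hk; exact H (L - k) k hk rfl
  intro t
  induction t using Nat.strong_induction_on with
  | _ t IH =>
    intro k hk hkt
    rcases Nat.eq_or_lt_of_le hk with h | h
    · obtain rfl : k = L := h
      rw [hzl, mul_one]
    · have h1 : 1 ≤ k + 1 := by omega
      have h2 : k + 1 ≤ L := by omega
      have hw' := hw (k+1) h1 h2
      have hz' := hz (k+1) h1 h2
      simp only [Nat.add_sub_cancel] at hw' hz'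
      have e1 : w ⟨k+1, by omega⟩ = w ⟨L, by omega⟩ * z ⟨k+1, by omega⟩ :=
        IH (t-1) (by omega) (k+1) h2 (by omega)
      rw [hw', hz', e1]
      split_ifs with h3
      · have e2 : w ⟨k+2, by omega⟩ = w ⟨L, by omega⟩ * z ⟨k+2, by omega⟩ :=
          IH (t-2) (by omega) (k+2) h3 (by omega)
        rw [e2]; ring
      · ring

/-- Expansion of a row sum for a tridiagonal matrix. -/
lemma star_tri_row {K : Type*} [CommRing K] (L : ℕ) (M : Matrix (Fin (L+1)) (Fin (L+1)) ℤ)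
    (hMadj : ∀ (i i' : Fin (L + 1)),
      ((i : ℕ) + 1 = (i' : ℕ) ∨ (i' : ℕ) + 1 = (i : ℕ)) → M i i' = 1)
    (hMoff : ∀ (i i' : Fin (L + 1)),
      i ≠ i' → (i : ℕ) + 1 ≠ (i' : ℕ) → (i' : ℕ) + 1 ≠ (i : ℕ) → M i i' = 0)
    (w : Fin (L+1) → K) (k : ℕ) (hk : k ≤ L) :
    ∑ i', ((M ⟨k, by omega⟩ i' : ℤ) : K) * w i' =
      (if h : 1 ≤ k then w ⟨k-1, by omega⟩ else 0)
      + ((M ⟨k, by omega⟩ ⟨k, by omega⟩ : ℤ) : K) * w ⟨k, by omega⟩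
      + (if h : k+1 ≤ L then w ⟨k+1, by omega⟩ else 0) := by
  have key : ∀ i' : Fin (L+1), ((M ⟨k, by omega⟩ i' : ℤ) : K) * w i' =
      (if i' = (⟨k, by omega⟩ : Fin (L+1)) then ((M ⟨k, by omega⟩ ⟨k, by omega⟩ : ℤ) : K) * w i' else 0)
      + ((if h : 1 ≤ k then (if i' = (⟨k-1, by omega⟩ : Fin (L+1)) then w i' else 0) else 0)
      + (if h : k+1 ≤ L then (if i' = (⟨k+1, by omega⟩ : Fin (L+1)) then w i' else 0) else 0)) := by
    intro i'
    by_cases h0 : i' = (⟨k, by omega⟩ : Fin (L+1))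
    · subst h0
      rw [if_pos rfl]
      have hA : ∀ (h : 1 ≤ k), ¬((⟨k, by omega⟩ : Fin (L+1)) = (⟨k-1, by omega⟩ : Fin (L+1))) := by
        intro h hc; rw [Fin.mk.injEq] at hc; omega
      have hB : ∀ (h : k+1 ≤ L), ¬((⟨k, by omega⟩ : Fin (L+1)) = (⟨k+1, by omega⟩ : Fin (L+1))) := by
        intro h hc; rw [Fin.mk.injEq] at hc; omega
      split_ifs with h1 h2 h2 <;>
        simp_all
    · rw [if_neg h0]
      rcases i' with ⟨v, hv⟩
      have hvk : v ≠ k := fun hc => h0 (Fin.ext hc)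
      by_cases hA : v + 1 = k
      · -- i' = k - 1
        have h1 : 1 ≤ k := by omega
        have : M ⟨k, by omega⟩ ⟨v, hv⟩ = 1 := hMadj _ _ (Or.inr hA)
        rw [this]
        have hne2 : ∀ (h : k+1 ≤ L), ¬((⟨v, hv⟩ : Fin (L+1)) = (⟨k+1, by omega⟩ : Fin (L+1))) := by
          intro h hc; rw [Fin.mk.injEq] at hc; omega
        have heq : (⟨v, hv⟩ : Fin (L+1)) = (⟨k-1, by omega⟩ : Fin (L+1)) := by
          rw [Fin.mk.injEq]; omega
        rw [dif_pos h1, if_pos heq]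
        by_cases h2 : k + 1 ≤ L
        · rw [dif_pos h2, if_neg (hne2 h2)]; push_cast; ring
        · rw [dif_neg h2]; push_cast; ring
      · by_cases hB : v = k + 1
        · have h2 : k + 1 ≤ L := by omega
          have : M ⟨k, by omega⟩ ⟨v, hv⟩ = 1 := hMadj _ _ (Or.inl hB.symm)
          rw [this]
          have hne1 : ∀ (h : 1 ≤ k), ¬((⟨v, hv⟩ : Fin (L+1)) = (⟨k-1, by omega⟩ : Fin (L+1))) := by
            intro h hc; rw [Fin.mk.injEq] at hc; omega
          rw [dif_pos h2, if_pos (by rw [Fin.mk.injEq]; omega)]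
          by_cases h1 : 1 ≤ k
          · rw [dif_pos h1, if_neg (hne1 h1)]; push_cast; ring
          · rw [dif_neg h1]; push_cast; ring
        · have : M ⟨k, by omega⟩ ⟨v, hv⟩ = 0 := by
            apply hMoff
            · intro hc; rw [Fin.mk.injEq] at hc; omega
            · simp; omega
            · simp; omega
          rw [this]
          have hne1 : ∀ (h : 1 ≤ k), ¬((⟨v, hv⟩ : Fin (L+1)) = (⟨k-1, by omega⟩ : Fin (L+1))) := by
            intro h hc; rw [Fin.mk.injEq] at hc; omega
          have hne2 : ∀ (h : k+1 ≤ L), ¬((⟨v, hv⟩ : Fin (L+1)) = (⟨k+1, by omega⟩ : Fin (L+1))) := by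
            intro h hc; rw [Fin.mk.injEq] at hc; omega
          by_cases h1 : 1 ≤ k <;> by_cases h2 : k + 1 ≤ L
          · rw [dif_pos h1, if_neg (hne1 h1), dif_pos h2, if_neg (hne2 h2)]; push_cast; ring
          · rw [dif_pos h1, if_neg (hne1 h1), dif_neg h2]; push_cast; ring
          · rw [dif_neg h1, dif_pos h2, if_neg (hne2 h2)]; push_cast; ring
          · rw [dif_neg h1, dif_neg h2]; push_cast; ring
  rw [Finset.sum_congr rfl (fun i' _ => key i')]
  by_cases h1 : 1 ≤ k <;> by_cases h2 : k + 1 ≤ L <;>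
    simp [h1, h2, Finset.sum_add_distrib, Finset.sum_ite_eq' Finset.univ] <;> ring

variable {K : Type*} [CommRing K] {m : ℕ} {ℓ : Fin m → ℕ}

lemma star_sum_option (f : Option ((j : Fin m) × Fin (ℓ j + 1)) → K) :
    ∑ y, f y = f none + ∑ j, ∑ i, f (some ⟨j, i⟩) := by
  rw [Fintype.sum_option]
  congr 1
  rw [← Finset.univ_sigma_univ, Finset.sum_sigma]

lemma star_row_none
    (NK : Matrix (Option ((j : Fin m) × Fin (ℓ j + 1)))
                 (Option ((j : Fin m) × Fin (ℓ j + 1))) K)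
    (c₀ : K) (h0 : NK none none = c₀)
    (h1 : ∀ (j : Fin m) (i : Fin (ℓ j + 1)),
      NK none (some ⟨j, i⟩) = if i = 0 then 1 else 0)
    (v : Option ((j : Fin m) × Fin (ℓ j + 1)) → K) :
    (NK.mulVec v) none = c₀ * v none + ∑ j, v (some ⟨j, 0⟩) := by
  rw [Matrix.mulVec, dotProduct, star_sum_option, h0]
  congr 1
  apply Finset.sum_congr rfl
  intro j _
  have : ∀ i : Fin (ℓ j + 1), NK none (some ⟨j, i⟩) * v (some ⟨j, i⟩)
      = if i = 0 then v (some ⟨j, i⟩) else 0 := by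
    intro i; rw [h1]; split_ifs <;> simp
  rw [Finset.sum_congr rfl (fun i _ => this i), Finset.sum_ite_eq' Finset.univ]
  simp

lemma star_row_some
    (NK : Matrix (Option ((j : Fin m) × Fin (ℓ j + 1)))
                 (Option ((j : Fin m) × Fin (ℓ j + 1))) K)
    (mK : ∀ j : Fin m, Matrix (Fin (ℓ j + 1)) (Fin (ℓ j + 1)) K)
    (h2 : ∀ (j : Fin m) (i : Fin (ℓ j + 1)),
      NK (some ⟨j, i⟩) none = if i = 0 then 1 else 0)
    (h3 : ∀ (j : Fin m) (i i' : Fin (ℓ j + 1)),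
      NK (some ⟨j, i⟩) (some ⟨j, i'⟩) = mK j i i')
    (h4 : ∀ (j j' : Fin m) (i : Fin (ℓ j + 1)) (i' : Fin (ℓ j' + 1)),
      j ≠ j' → NK (some ⟨j, i⟩) (some ⟨j', i'⟩) = 0)
    (v : Option ((j : Fin m) × Fin (ℓ j + 1)) → K) (j : Fin m) (i : Fin (ℓ j + 1)) :
    (NK.mulVec v) (some ⟨j, i⟩) =
      (if i = 0 then v none else 0) + ∑ i', mK j i i' * v (some ⟨j, i'⟩) := by
  rw [Matrix.mulVec, dotProduct, star_sum_option, h2]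
  congr 1
  · split_ifs <;> simp
  · rw [Finset.sum_eq_single j]
    · exact Finset.sum_congr rfl (fun i' _ => by rw [h3])
    · intro j' _ hj'
      apply Finset.sum_eq_zero
      intro i' _
      rw [h4 j j' i i' (Ne.symm hj'), zero_mul]
    · intro h; exact absurd (Finset.mem_univ j) h

set_option maxHeartbeats 2000000 in
/-- **Star-shaped intersection matrices: equal chains case.**
Let `N = N(s₀ | a₁/b₁, …, a_m/b_m)` be a star-shaped intersection matrix and `p ≥ 2` an integer.
If `a_j = p` for all `j` and `p·s₀ − Σ b_j = 1`, then the discriminant group `Φ_N` is killed by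
`p` and has order `p^{m−1}`. -/
theorem star_shaped_killed_by_p
    (m : ℕ) (hm : 3 ≤ m)
    (ℓ : Fin m → ℕ)
    (M : ∀ j : Fin m, Matrix (Fin (ℓ j + 1)) (Fin (ℓ j + 1)) ℤ)
    (hMdiag : ∀ j i, M j i i ≤ -2)
    (hMadj : ∀ (j : Fin m) (i i' : Fin (ℓ j + 1)),
      ((i : ℕ) + 1 = (i' : ℕ) ∨ (i' : ℕ) + 1 = (i : ℕ)) → M j i i' = 1)
    (hMoff : ∀ (j : Fin m) (i i' : Fin (ℓ j + 1)),
      i ≠ i' → (i : ℕ) + 1 ≠ (i' : ℕ) → (i' : ℕ) + 1 ≠ (i : ℕ) → M j i i' = 0)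
    (a : Fin m → ℤ) (ha : ∀ j, 1 ≤ a j)
    (R : ∀ j : Fin m, Fin (ℓ j + 1) → ℤ)
    (hRpos : ∀ j i, 0 < R j i)
    (hRlast : ∀ j, R j (Fin.last (ℓ j)) = 1)
    (hRrel : ∀ j, (M j).mulVec (R j) = fun i => if i = 0 then -(a j) else 0)
    (s₀ : ℤ) (hs₀ : 1 ≤ s₀)
    (N : Matrix (Option ((j : Fin m) × Fin (ℓ j + 1)))
                (Option ((j : Fin m) × Fin (ℓ j + 1))) ℤ)
    (hN₀ : N none none = -s₀)
    (hN₁ : ∀ (j : Fin m) (i : Fin (ℓ j + 1)),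
      N none (some ⟨j, i⟩) = if i = 0 then 1 else 0)
    (hN₂ : ∀ (j : Fin m) (i : Fin (ℓ j + 1)),
      N (some ⟨j, i⟩) none = if i = 0 then 1 else 0)
    (hN₃ : ∀ (j : Fin m) (i i' : Fin (ℓ j + 1)),
      N (some ⟨j, i⟩) (some ⟨j, i'⟩) = M j i i')
    (hN₄ : ∀ (j j' : Fin m) (i : Fin (ℓ j + 1)) (i' : Fin (ℓ j' + 1)),
      j ≠ j' → N (some ⟨j, i⟩) (some ⟨j', i'⟩) = 0)
    (hNdef : ∀ v : Option ((j : Fin m) × Fin (ℓ j + 1)) → ℚ, v ≠ 0 →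
      v ⬝ᵥ (N.map (Int.cast : ℤ → ℚ)).mulVec v < 0)
    (p : ℕ) (hp : 2 ≤ p)
    (hap : ∀ j, a j = (p : ℤ))
    (hrel : (p : ℤ) * s₀ - ∑ j, R j 0 = 1) :
    (∀ x : (Option ((j : Fin m) × Fin (ℓ j + 1)) → ℤ) ⧸ LinearMap.range N.mulVecLin,
      (p : ℤ) • x = 0) ∧
    Nat.card ((Option ((j : Fin m) × Fin (ℓ j + 1)) → ℤ) ⧸ LinearMap.range N.mulVecLin) =
      p ^ (m - 1) := by
  classical
  haveI : NeZero p := ⟨by omega⟩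
  set Λ : Submodule ℤ (Option ((j : Fin m) × Fin (ℓ j + 1)) → ℤ) :=
    LinearMap.range N.mulVecLin with hΛdef
  set e : Option ((j : Fin m) × Fin (ℓ j + 1)) → Option ((j : Fin m) × Fin (ℓ j + 1)) → ℤ :=
    fun y x => if x = y then 1 else 0 with hedef
  set U : Fin m → Option ((j : Fin m) × Fin (ℓ j + 1)) → ℤ :=
    fun j x => Option.elim x 0 fun s => if s.1 = j then R s.1 s.2 else 0 with hUdef
  have hmem : ∀ w, N.mulVec w ∈ Λ := fun w => ⟨w, by simp [Matrix.mulVecLin_apply]⟩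
  have hUnone : ∀ j, U j none = 0 := fun j => rfl
  have hUsome : ∀ (j j' : Fin m) (i' : Fin (ℓ j' + 1)),
      U j (some ⟨j', i'⟩) = if j' = j then R j' i' else 0 := fun _ _ _ => rfl
  -- values of e
  have e_nn : e none none = 1 := if_pos rfl
  have e_ns : ∀ y, e (some y) none = 0 := fun y => if_neg (by simp)
  have e_sn : ∀ y, e none (some y) = 0 := fun y => if_neg (by simp)
  have eeval : ∀ (j j' : Fin m) (i : Fin (ℓ j + 1)) (i' : Fin (ℓ j' + 1)),
      e (some ⟨j, i⟩) (some ⟨j', i'⟩) =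
        if h : j' = j then (if (i' : ℕ) = (i : ℕ) then 1 else 0) else 0 := by
    intro j j' i i'
    simp only [hedef]
    by_cases h : j' = j
    · subst h
      rw [dif_pos rfl]
      by_cases hi : i' = i
      · subst hi; rw [if_pos rfl, if_pos rfl]
      · have hne : ¬(some (⟨j', i'⟩ : (j : Fin m) × Fin (ℓ j + 1)) = some ⟨j', i⟩) :=
          fun hc => hi (eq_of_heq ((Sigma.mk.inj_iff.mp (Option.some.inj hc)).2))
        rw [if_neg hne, if_neg (fun hc => hi (Fin.ext hc))]
    · have hne : ¬(some (⟨j', i'⟩ : (j : Fin m) × Fin (ℓ j + 1)) = some ⟨j, i⟩) :=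
        fun hc => h (congrArg Sigma.fst (Option.some.inj hc))
      rw [dif_neg h, if_neg hne]
  -- rows of N applied to U j
  have hUrow_none : ∀ j, (N.mulVec (U j)) none = R j 0 := by
    intro j
    rw [star_row_none N (-s₀) hN₀ hN₁ (U j)]
    rw [hUnone, mul_zero, zero_add,
      Finset.sum_congr rfl (fun j' _ => hUsome j j' 0),
      Finset.sum_ite_eq' Finset.univ j (fun j' => R j' 0)]
    simp
  have hUrow_some : ∀ (j j' : Fin m) (i : Fin (ℓ j' + 1)), (N.mulVec (U j)) (some ⟨j', i⟩) =
      if j' = j then (if i = 0 then -(p : ℤ) else 0) else 0 := by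
    intro j j' i
    rw [star_row_some N M hN₂ hN₃ hN₄ (U j) j' i, hUnone, ite_self, zero_add]
    by_cases hj : j' = j
    · subst hj
      rw [Finset.sum_congr rfl (fun i' _ => by rw [hUsome, if_pos rfl]),
        if_pos rfl]
      have hmv : ∑ i', M j' i i' * R j' i' = (M j').mulVec (R j') i := by
        simp [Matrix.mulVec, dotProduct]
      rw [hmv, hRrel j', hap j']
    · rw [Finset.sum_congr rfl (fun i' _ => by rw [hUsome, if_neg hj, mul_zero]),
        Finset.sum_const_zero, if_neg hj]
  have hErow : ∀ y, N.mulVec (e y) = fun x => N x y := by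
    intro y; funext x
    simp only [Matrix.mulVec, dotProduct, hedef, mul_ite, mul_one, mul_zero]
    rw [Finset.sum_ite_eq' Finset.univ y (fun z => N x z)]
    simp
  -- the node class is in the lattice
  have key3 : N.mulVecLin (-(∑ j, U j) - (p : ℤ) • e none) = e none := by
    have hlin : N.mulVecLin (-(∑ j, U j) - (p : ℤ) • e none)
        = -(∑ j, N.mulVec (U j)) - (p : ℤ) • N.mulVec (e none) := by
      rw [map_sub, map_neg, map_sum, LinearMap.map_smul]
      simp only [Matrix.mulVecLin_apply]
    rw [hlin, hErow none]
    funext x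
    rcases x with _ | ⟨j', i⟩
    · simp only [Pi.sub_apply, Pi.neg_apply, Finset.sum_apply, Pi.smul_apply, smul_eq_mul,
        hN₀, e_nn]
      rw [Finset.sum_congr rfl (fun j _ => hUrow_none j)]
      linarith [hrel]
    · simp only [Pi.sub_apply, Pi.neg_apply, Finset.sum_apply, Pi.smul_apply, smul_eq_mul,
        hN₂, e_sn]
      rw [Finset.sum_congr rfl (fun j _ => hUrow_some j j' i),
        Finset.sum_ite_eq Finset.univ j' (fun _ => if i = 0 then -(p : ℤ) else 0)]
      split_ifs <;> simp_all
  have henone : e none ∈ Λ := ⟨-(∑ j, U j) - (p : ℤ) • e none, key3⟩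
  have hmemL : ∀ w, N.mulVecLin w ∈ Λ := fun w => LinearMap.mem_range_self _ w
  have hpe0 : ∀ j, (p : ℤ) • e (some ⟨j, 0⟩) ∈ Λ := by
    intro j
    have hid : (p : ℤ) • e (some ⟨j, 0⟩) = (R j 0) • e none - N.mulVecLin (U j) := by
      funext x
      simp only [Pi.smul_apply, smul_eq_mul, Pi.sub_apply, Matrix.mulVecLin_apply]
      rcases x with _ | ⟨j', i⟩
      · rw [e_ns, e_nn, hUrow_none j]; ring
      · rw [e_sn, eeval, hUrow_some j j' i]
        by_cases hj : j' = j
        · subst hj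
          rw [dif_pos rfl, if_pos rfl]
          by_cases hi : i = 0
          · rw [if_pos (by simp [hi]), if_pos hi]; ring
          · rw [if_neg (Fin.val_ne_of_ne hi), if_neg hi]; ring
        · rw [dif_neg hj, if_neg hj]; ring
    rw [hid]
    exact Submodule.sub_mem _ (Submodule.smul_mem _ _ henone) (hmemL (U j))
  have hpek : ∀ (j : Fin m) (k : ℕ) (hk : k < ℓ j + 1),
      (p : ℤ) • e (some ⟨j, ⟨k, hk⟩⟩) ∈ Λ := by
    intro j k
    induction k using Nat.strong_induction_on with
    | _ k IH =>
      intro hk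
      match k, hk with
      | 0, hk =>
        have h0 : (⟨0, hk⟩ : Fin (ℓ j + 1)) = 0 := Fin.ext (by simp)
        rw [h0]; exact hpe0 j
      | (k+1), hk =>
        have hk' : k < ℓ j + 1 := by omega
        have hcol : ∀ (i : Fin (ℓ j + 1)), N.mulVecLin (e (some ⟨j, i⟩))
            = fun x => N x (some ⟨j, i⟩) := by
          intro i; rw [Matrix.mulVecLin_apply]; exact hErow _
        have hkm : k - 1 < ℓ j + 1 := by omega
        have hid : (p : ℤ) • e (some ⟨j, ⟨k+1, hk⟩⟩) =
            (p : ℤ) • N.mulVecLin (e (some ⟨j, ⟨k, hk'⟩⟩))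
              - (p : ℤ) • (if k = 0 then e none else e (some ⟨j, ⟨k-1, hkm⟩⟩))
              - (M j ⟨k, hk'⟩ ⟨k, hk'⟩) • ((p : ℤ) • e (some ⟨j, ⟨k, hk'⟩⟩)) := by
          funext x
          simp only [Pi.smul_apply, smul_eq_mul, Pi.sub_apply, hcol]
          rcases x with _ | ⟨j', i⟩
          · rw [e_ns, e_ns, hN₁]
            rcases Nat.eq_zero_or_pos k with hk0 | hk0
            · rw [if_pos (by omega : k = 0), e_nn,
                if_pos (show (⟨k, hk'⟩ : Fin (ℓ j + 1)) = 0 by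
                  rw [Fin.ext_iff]; simp only [Fin.val_mk, Fin.val_zero]; omega)]
              ring
            · rw [if_neg (by omega : ¬ k = 0), e_ns,
                if_neg (show ¬(⟨k, hk'⟩ : Fin (ℓ j + 1)) = 0 by
                  rw [Fin.ext_iff]; simp only [Fin.val_mk, Fin.val_zero]; omega)]
              ring
          · have hnone : (if k = 0 then e none else e (some ⟨j, ⟨k-1, hkm⟩⟩)) (some ⟨j', i⟩)
                = if h : j' = j then (if (i : ℕ) = k - 1 ∧ 1 ≤ k then 1 else 0) else 0 := by
              rcases Nat.eq_zero_or_pos k with hk0 | hk0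
              · rw [if_pos hk0, e_sn]
                by_cases h : j' = j
                · rw [dif_pos h, if_neg (by omega)]
                · rw [dif_neg h]
              · rw [if_neg (by omega : ¬ k = 0), eeval]
                by_cases h : j' = j
                · rw [dif_pos h, dif_pos h]
                  simp only [Fin.val_mk]
                  by_cases h2 : (i : ℕ) = k - 1
                  · rw [if_pos h2, if_pos ⟨h2, by omega⟩]
                  · rw [if_neg h2, if_neg (fun hc => h2 hc.1)]
                · rw [dif_neg h, dif_neg h]
            rw [eeval, eeval, hnone]
            by_cases hj : j' = j
            · subst hj
              rw [dif_pos rfl, dif_pos rfl, dif_pos rfl, hN₃]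
              rcases i with ⟨vi, hvi⟩
              simp only [Fin.val_mk]
              by_cases hA : vi = k + 1
              · have h1 : M j' ⟨vi, hvi⟩ ⟨k, hk'⟩ = 1 :=
                  hMadj _ _ _ (Or.inr (by simp only [Fin.val_mk]; omega))
                rw [h1, if_pos hA, if_neg (by omega), if_neg (by omega)]
                ring
              · by_cases hB : vi = k
                · rw [if_neg (by omega), if_pos hB, if_neg (by omega)]
                  subst hB
                  rw [show (⟨vi, hvi⟩ : Fin (ℓ j' + 1)) = ⟨vi, hk'⟩ from rfl]
                  ring
                · by_cases hC : vi = k - 1 ∧ 1 ≤ k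
                  · have h1 : M j' ⟨vi, hvi⟩ ⟨k, hk'⟩ = 1 :=
                      hMadj _ _ _ (Or.inl (by simp only [Fin.val_mk]; omega))
                    rw [h1, if_neg (by omega), if_pos hC, if_neg (by omega)]
                    ring
                  · have h1 : M j' ⟨vi, hvi⟩ ⟨k, hk'⟩ = 0 := by
                      apply hMoff
                      · rw [Ne, Fin.ext_iff]; simp only [Fin.val_mk]; omega
                      · simp only [Fin.val_mk]; omega
                      · simp only [Fin.val_mk]; omega
                    rw [h1, if_neg (by omega), if_neg hC, if_neg (by omega)]
                    ring
            · rw [dif_neg hj, dif_neg hj, dif_neg hj,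
                hN₄ j' j i ⟨k, hk'⟩ hj]
              ring
        rw [hid]
        have hprev : (p : ℤ) • (if k = 0 then e none else e (some ⟨j, ⟨k-1, hkm⟩⟩)) ∈ Λ := by
          rcases Nat.eq_zero_or_pos k with hk0 | hk0
          · rw [if_pos (by omega : k = 0)]; exact Submodule.smul_mem _ _ henone
          · rw [if_neg (by omega : ¬ k = 0)]; exact IH (k-1) (by omega) hkm
        exact Submodule.sub_mem _ (Submodule.sub_mem _
          (Submodule.smul_mem _ _ (hmemL _)) hprev)
          (Submodule.smul_mem _ _ (IH k (by omega) hk'))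
  have hpeAll : ∀ x, (p : ℤ) • e x ∈ Λ := by
    rintro (_ | ⟨j, i⟩)
    · exact Submodule.smul_mem _ _ henone
    · rcases i with ⟨k, hk⟩; exact hpek j k hk
  have hpall : ∀ v, (p : ℤ) • v ∈ Λ := by
    intro v
    have hrepr : (p : ℤ) • v = ∑ x, v x • ((p : ℤ) • e x) := by
      funext y
      rw [Finset.sum_apply]
      simp only [Pi.smul_apply, smul_eq_mul, hedef]
      rw [Finset.sum_congr rfl (fun x _ => show v x * ((p:ℤ) * if y = x then 1 else 0)
          = if y = x then v x * (p:ℤ) else 0 by split_ifs <;> ring),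
        Finset.sum_ite_eq Finset.univ y (fun x => v x * (p:ℤ))]
      simp [mul_comm]
    rw [hrepr]
    exact Submodule.sum_mem _ (fun x _ => Submodule.smul_mem _ _ (hpeAll x))
  refine ⟨?_, ?_⟩
  · -- killed by p
    intro x
    obtain ⟨v, rfl⟩ := Submodule.Quotient.mk_surjective Λ x
    rw [← Submodule.Quotient.mk_smul, Submodule.Quotient.mk_eq_zero]
    exact hpall v
  · -- cardinality
    set NK : Matrix (Option ((j : Fin m) × Fin (ℓ j + 1)))
        (Option ((j : Fin m) × Fin (ℓ j + 1))) (ZMod p) :=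
      N.map (Int.cast : ℤ → ZMod p) with hNKdef
    have hK0 : NK none none = ((-s₀ : ℤ) : ZMod p) := by rw [hNKdef, Matrix.map_apply, hN₀]
    have hK1 : ∀ (j : Fin m) (i : Fin (ℓ j + 1)),
        NK none (some ⟨j, i⟩) = if i = 0 then 1 else 0 := by
      intro j i; rw [hNKdef, Matrix.map_apply, hN₁]; split_ifs <;> simp
    have hK2 : ∀ (j : Fin m) (i : Fin (ℓ j + 1)),
        NK (some ⟨j, i⟩) none = if i = 0 then 1 else 0 := by
      intro j i; rw [hNKdef, Matrix.map_apply, hN₂]; split_ifs <;> simp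
    have hK3 : ∀ (j : Fin m) (i i' : Fin (ℓ j + 1)),
        NK (some ⟨j, i⟩) (some ⟨j, i'⟩) = ((M j).map (Int.cast : ℤ → ZMod p)) i i' := by
      intro j i i'; rw [hNKdef, Matrix.map_apply, hN₃, Matrix.map_apply]
    have hK4 : ∀ (j j' : Fin m) (i : Fin (ℓ j + 1)) (i' : Fin (ℓ j' + 1)),
        j ≠ j' → NK (some ⟨j, i⟩) (some ⟨j', i'⟩) = 0 := by
      intro j j' i i' hjj; rw [hNKdef, Matrix.map_apply, hN₄ j j' i i' hjj, Int.cast_zero]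
    -- the cast row relation for R
    have hRrow : ∀ (j : Fin m) (k : ℕ) (hk : k ≤ ℓ j),
        ∑ i', ((M j ⟨k, by omega⟩ i' : ℤ) : ZMod p) * ((R j i' : ℤ) : ZMod p)
          = ((if (⟨k, by omega⟩ : Fin (ℓ j + 1)) = 0 then -(a j) else 0 : ℤ) : ZMod p) := by
      intro j k hk
      have h1 := congrFun (hRrel j) ⟨k, by omega⟩
      simp only [Matrix.mulVec, dotProduct] at h1
      rw [← h1]
      push_cast
      rfl
    -- kernel structure: values along each chain are proportional to R
    have S1 : ∀ v, NK.mulVecLin v = 0 → ∀ (j : Fin m) (i : Fin (ℓ j + 1)),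
        v (some ⟨j, i⟩) = v (some ⟨j, Fin.last (ℓ j)⟩) * ((R j i : ℤ) : ZMod p) := by
      intro v hv j i
      have hv' : ∀ x, (NK.mulVec v) x = 0 := by
        intro x; rw [← Matrix.mulVecLin_apply, hv]; rfl
      have hd := fun (k : ℕ) (h : k ≤ ℓ j) => (rfl :
        (if h' : k ≤ ℓ j then ((M j ⟨k, by omega⟩ ⟨k, by omega⟩ : ℤ) : ZMod p) else 0) =
        (if h' : k ≤ ℓ j then ((M j ⟨k, by omega⟩ ⟨k, by omega⟩ : ℤ) : ZMod p) else 0))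
      have hw : ∀ k, 1 ≤ k → ∀ h2 : k ≤ ℓ j,
          v (some ⟨j, ⟨k-1, by omega⟩⟩) =
            -(if h' : k ≤ ℓ j then ((M j ⟨k, by omega⟩ ⟨k, by omega⟩ : ℤ) : ZMod p) else 0)
              * v (some ⟨j, ⟨k, by omega⟩⟩) -
            (if h' : k+1 ≤ ℓ j then v (some ⟨j, ⟨k+1, by omega⟩⟩) else 0) := by
        intro k h1 h2
        have h0 := hv' (some ⟨j, ⟨k, by omega⟩⟩)
        rw [star_row_some NK (fun j => (M j).map (Int.cast : ℤ → ZMod p)) hK2 hK3 hK4 v j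
          ⟨k, by omega⟩] at h0
        rw [if_neg (show ¬(⟨k, by omega⟩ : Fin (ℓ j + 1)) = 0 by
          rw [Fin.ext_iff]; simp only [Fin.val_mk, Fin.val_zero]; omega), zero_add] at h0
        have hexp : ∑ i', ((M j).map (Int.cast : ℤ → ZMod p)) ⟨k, by omega⟩ i'
            * v (some ⟨j, i'⟩) =
            ∑ i', ((M j ⟨k, by omega⟩ i' : ℤ) : ZMod p) * v (some ⟨j, i'⟩) := rfl
        rw [hexp, star_tri_row (ℓ j) (M j) (hMadj j) (hMoff j)
          (fun i' => v (some ⟨j, i'⟩)) k h2, dif_pos h1] at h0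
        rw [dif_pos h2]
        linear_combination h0
      have hz : ∀ k, 1 ≤ k → ∀ h2 : k ≤ ℓ j,
          ((R j ⟨k-1, by omega⟩ : ℤ) : ZMod p) =
            -(if h' : k ≤ ℓ j then ((M j ⟨k, by omega⟩ ⟨k, by omega⟩ : ℤ) : ZMod p) else 0)
              * ((R j ⟨k, by omega⟩ : ℤ) : ZMod p) -
            (if h' : k+1 ≤ ℓ j then ((R j ⟨k+1, by omega⟩ : ℤ) : ZMod p) else 0) := by
        intro k h1 h2
        have h0 := hRrow j k h2
        rw [star_tri_row (ℓ j) (M j) (hMadj j) (hMoff j)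
          (fun i' => ((R j i' : ℤ) : ZMod p)) k h2, dif_pos h1] at h0
        rw [if_neg (show ¬(⟨k, by omega⟩ : Fin (ℓ j + 1)) = 0 by
          rw [Fin.ext_iff]; simp only [Fin.val_mk, Fin.val_zero]; omega), Int.cast_zero] at h0
        rw [dif_pos h2]
        linear_combination h0
      have hzl : ((R j ⟨ℓ j, by omega⟩ : ℤ) : ZMod p) = 1 := by
        rw [show (⟨ℓ j, by omega⟩ : Fin (ℓ j + 1)) = Fin.last (ℓ j) from rfl, hRlast j,
          Int.cast_one]
      have hmain := star_chain_det (ℓ j)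
        (fun k => if h' : k ≤ ℓ j then ((M j ⟨k, by omega⟩ ⟨k, by omega⟩ : ℤ) : ZMod p) else 0)
        (fun i' => v (some ⟨j, i'⟩)) (fun i' => ((R j i' : ℤ) : ZMod p))
        hw hz hzl i.val (by omega)
      exact hmain
    have hcastsum : ∀ (j : Fin m) (c : ZMod p) (i : Fin (ℓ j + 1)),
        ∑ i', ((M j).map (Int.cast : ℤ → ZMod p)) i i' * (c * ((R j i' : ℤ) : ZMod p))
          = c * ((((M j).mulVec (R j)) i : ℤ) : ZMod p) := by
      intro j c i
      simp only [Matrix.mulVec, dotProduct, Matrix.map_apply]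
      push_cast
      rw [Finset.mul_sum]
      exact Finset.sum_congr rfl (fun i' _ => by ring)
    have hRrel' : ∀ (j : Fin m) (i : Fin (ℓ j + 1)),
        ((((M j).mulVec (R j)) i : ℤ) : ZMod p) = 0 := by
      intro j i
      rw [hRrel j]
      by_cases hi : i = 0
      · simp only [hi, if_pos rfl, hap]
        push_cast
        simp [ZMod.natCast_self]
      · simp [hi]
    have vnone : ∀ v, NK.mulVecLin v = 0 → v none = 0 := by
      intro v hv
      have hv' : ∀ x, (NK.mulVec v) x = 0 := by
        intro x; rw [← Matrix.mulVecLin_apply, hv]; rfl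
      have j0 : Fin m := ⟨0, by omega⟩
      have h0 := hv' (some ⟨(⟨0, by omega⟩ : Fin m), 0⟩)
      rw [star_row_some NK (fun j => (M j).map (Int.cast : ℤ → ZMod p)) hK2 hK3 hK4 v
        (⟨0, by omega⟩ : Fin m) 0, if_pos rfl] at h0
      rw [Finset.sum_congr rfl (fun i' _ => by
          rw [S1 v hv (⟨0, by omega⟩ : Fin m) i']), hcastsum, hRrel'] at h0
      simpa using h0
    have hsum0 : ∀ v, NK.mulVecLin v = 0 →
        ∑ j, v (some ⟨j, Fin.last (ℓ j)⟩) * ((R j 0 : ℤ) : ZMod p) = 0 := by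
      intro v hv
      have hv' : ∀ x, (NK.mulVec v) x = 0 := by
        intro x; rw [← Matrix.mulVecLin_apply, hv]; rfl
      have h0 := hv' none
      rw [star_row_none NK ((-s₀ : ℤ) : ZMod p) hK0 hK1 v, vnone v hv, mul_zero,
        zero_add] at h0
      rw [← h0]
      exact Finset.sum_congr rfl (fun j _ => (S1 v hv j 0).symm)
    have memker : ∀ c : Fin m → ZMod p, (∑ j, c j * ((R j 0 : ℤ) : ZMod p)) = 0 →
        NK.mulVecLin (fun x => Option.elim x 0 fun s => c s.1 * ((R s.1 s.2 : ℤ) : ZMod p))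
          = 0 := by
      intro c hc
      funext x
      rw [Matrix.mulVecLin_apply]
      rcases x with _ | ⟨j, i⟩
      · rw [star_row_none NK ((-s₀ : ℤ) : ZMod p) hK0 hK1]
        show ((-s₀ : ℤ) : ZMod p) * 0 + ∑ j, c j * ((R j 0 : ℤ) : ZMod p) = 0
        rw [mul_zero, zero_add]
        exact hc
      · rw [star_row_some NK (fun j => (M j).map (Int.cast : ℤ → ZMod p)) hK2 hK3 hK4 _ j i]
        show (if i = 0 then (0 : ZMod p) else 0)
            + ∑ i', ((M j).map (Int.cast : ℤ → ZMod p)) i i'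
                * (c j * ((R j i' : ℤ) : ZMod p)) = 0
        rw [ite_self, zero_add, hcastsum j (c j) i, hRrel', mul_zero]
    -- the functional given by pairing with the b_j
    set Lb : (Fin m → ZMod p) →ₗ[ZMod p] ZMod p :=
      { toFun := fun c => ∑ j, c j * ((R j 0 : ℤ) : ZMod p),
        map_add' := by
          intro x y; simp only [Pi.add_apply, add_mul, Finset.sum_add_distrib]
        map_smul' := by
          intro r x
          simp only [Pi.smul_apply, smul_eq_mul, RingHom.id_apply, Finset.mul_sum, mul_assoc] }
      with hLbdef
    have hLbapply : ∀ c, Lb c = ∑ j, c j * ((R j 0 : ℤ) : ZMod p) := fun c => rfl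
    -- the explicit equivalence between the kernels
    have hEquiv : Nat.card (LinearMap.ker NK.mulVecLin) = Nat.card (LinearMap.ker Lb) := by
      apply Nat.card_congr
      refine
        { toFun := fun v => ⟨fun j => v.1 (some ⟨j, Fin.last (ℓ j)⟩), ?_⟩
          invFun := fun c => ⟨fun x =>
            Option.elim x 0 fun s => c.1 s.1 * ((R s.1 s.2 : ℤ) : ZMod p), ?_⟩
          left_inv := ?_
          right_inv := ?_ }
      · rw [LinearMap.mem_ker, hLbapply]
        exact hsum0 v.1 (LinearMap.mem_ker.mp v.2)
      · rw [LinearMap.mem_ker]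
        exact memker c.1 (LinearMap.mem_ker.mp c.2)
      · rintro ⟨v, hv⟩
        apply Subtype.ext
        funext x
        rcases x with _ | ⟨j, i⟩
        · exact (vnone v (LinearMap.mem_ker.mp hv)).symm
        · exact (S1 v (LinearMap.mem_ker.mp hv) j i).symm
      · rintro ⟨c, hc⟩
        apply Subtype.ext
        funext j
        show c j * ((R j (Fin.last (ℓ j)) : ℤ) : ZMod p) = c j
        rw [hRlast j, Int.cast_one, mul_one]
    -- cardinality of the kernel of Lb
    have hbsum : ∑ j, ((R j 0 : ℤ) : ZMod p) = -1 := by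
      have h1 : (∑ j, R j 0 : ℤ) = (p : ℤ) * s₀ - 1 := by linarith
      rw [← Int.cast_sum, h1]
      push_cast
      simp [ZMod.natCast_self]
    have hLsurj : Function.Surjective Lb := by
      intro y
      refine ⟨fun _ => -y, ?_⟩
      rw [hLbapply, ← Finset.mul_sum, hbsum]
      ring
    have cardPi : Nat.card (Fin m → ZMod p) = p ^ m := by
      rw [Nat.card_pi]
      simp [Nat.card_zmod]
    have cardQuotLb : Nat.card ((Fin m → ZMod p) ⧸ LinearMap.ker Lb) = p := by
      rw [Nat.card_congr (Lb.quotKerEquivOfSurjective hLsurj).toEquiv, Nat.card_zmod]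
    have hkerLb : Nat.card (LinearMap.ker Lb) * p = p ^ m := by
      have hc := Submodule.card_eq_card_quotient_mul_card (LinearMap.ker Lb)
      rw [cardPi, cardQuotLb] at hc
      omega
    -- the reduction map modulo p and the comparison of quotients
    set SK : Submodule ℤ (Option ((j : Fin m) × Fin (ℓ j + 1)) → ZMod p) :=
      (LinearMap.range NK.mulVecLin).restrictScalars ℤ with hSKdef
    set castL : ℤ →ₗ[ℤ] ZMod p := (Int.castAddHom (ZMod p)).toIntLinearMap with hcastLdef
    set π : (Option ((j : Fin m) × Fin (ℓ j + 1)) → ℤ) →ₗ[ℤ]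
        (Option ((j : Fin m) × Fin (ℓ j + 1)) → ZMod p) :=
      castL.compLeft (Option ((j : Fin m) × Fin (ℓ j + 1))) with hπdef
    have hπ : ∀ v x, π v x = ((v x : ℤ) : ZMod p) := fun v x => rfl
    set φ := SK.mkQ.comp π with hφdef
    have hπsurj : Function.Surjective π := by
      intro f
      refine ⟨fun x => ((f x).val : ℤ), funext fun x => ?_⟩
      rw [hπ]
      push_cast
      simp [ZMod.natCast_val, ZMod.cast_id]
    have hφsurj : Function.Surjective φ := by
      have hco : ⇑φ = ⇑SK.mkQ ∘ ⇑π := rfl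
      rw [hco]
      exact (Submodule.mkQ_surjective SK).comp hπsurj
    have hcast_mulVec : ∀ w, π (N.mulVec w) = NK.mulVec (π w) := by
      intro w
      funext x
      rw [hπ]
      exact RingHom.map_mulVec (Int.castRingHom (ZMod p)) N w x
    have hkerφ : LinearMap.ker φ = Λ := by
      ext v
      rw [LinearMap.mem_ker, hφdef, LinearMap.comp_apply, Submodule.mkQ_apply,
        Submodule.Quotient.mk_eq_zero]
      constructor
      · intro hv
        rw [hSKdef, Submodule.restrictScalars_mem] at hv
        obtain ⟨wb, hwb⟩ := hv
        set w : Option ((j : Fin m) × Fin (ℓ j + 1)) → ℤ := fun x => ((wb x).val : ℤ)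
          with hwdef
        have hπw : π w = wb := funext fun x => by
          rw [hπ, hwdef]
          push_cast
          simp [ZMod.natCast_val, ZMod.cast_id]
        have hdvd : ∀ x, (p : ℤ) ∣ (v x - N.mulVec w x) := by
          intro x
          rw [← ZMod.intCast_zmod_eq_zero_iff_dvd]
          push_cast
          have h2 : (((N.mulVec w) x : ℤ) : ZMod p) = NK.mulVec (π w) x :=
            congrFun (hcast_mulVec w) x
          rw [show ((v x : ℤ) : ZMod p) = π v x from rfl, h2, hπw,
            show NK.mulVec wb = π v from by rw [← Matrix.mulVecLin_apply, hwb]]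
          exact sub_self _
        set u : Option ((j : Fin m) × Fin (ℓ j + 1)) → ℤ :=
          fun x => (v x - N.mulVec w x) / (p : ℤ) with hudef
        have hvdec : v = N.mulVec w + (p : ℤ) • u := by
          funext x
          have h3 := Int.mul_ediv_cancel' (hdvd x)
          simp only [Pi.add_apply, Pi.smul_apply, smul_eq_mul, hudef]
          linarith
        rw [hvdec]
        exact Submodule.add_mem _ (hmem w) (hpall u)
      · rintro ⟨w, rfl⟩
        rw [hSKdef, Submodule.restrictScalars_mem]
        refine ⟨π w, ?_⟩
        show NK.mulVecLin (π w) = π (N.mulVecLin w)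
        rw [Matrix.mulVecLin_apply, Matrix.mulVecLin_apply]
        exact (hcast_mulVec w).symm
    have hquotcong : Nat.card ((Option ((j : Fin m) × Fin (ℓ j + 1)) → ℤ) ⧸ Λ)
        = Nat.card ((Option ((j : Fin m) × Fin (ℓ j + 1)) → ZMod p) ⧸ SK) := by
      refine Nat.card_congr (Equiv.trans ?_ (φ.quotKerEquivOfSurjective hφsurj).toEquiv)
      exact (Submodule.quotEquivOfEq Λ (LinearMap.ker φ) hkerφ.symm).toEquiv
    have c1 := Submodule.card_eq_card_quotient_mul_card SK
    have c2 := Submodule.card_eq_card_quotient_mul_card (LinearMap.ker NK.mulVecLin)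
    have c3 : Nat.card ((Option ((j : Fin m) × Fin (ℓ j + 1)) → ZMod p)
          ⧸ LinearMap.ker NK.mulVecLin)
        = Nat.card (LinearMap.range NK.mulVecLin) :=
      Nat.card_congr (LinearMap.quotKerEquivRange NK.mulVecLin).toEquiv
    have c4 : Nat.card SK = Nat.card (LinearMap.range NK.mulVecLin) := rfl
    have hrangepos : 0 < Nat.card (LinearMap.range NK.mulVecLin) := Nat.card_pos
    have hQK : Nat.card ((Option ((j : Fin m) × Fin (ℓ j + 1)) → ZMod p) ⧸ SK)
        = Nat.card (LinearMap.ker NK.mulVecLin) := by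
      rw [c3] at c2
      rw [c4] at c1
      refine Nat.eq_of_mul_eq_mul_left hrangepos ?_
      rw [← c1, c2, Nat.mul_comm]
    rw [hquotcong, hQK, hEquiv]
    have hpm : p ^ m = p ^ (m - 1) * p := by
      rw [← pow_succ]
      congr 1
      omega
    rw [hpm] at hkerLb
    exact Nat.eq_of_mul_eq_mul_right (by omega) hkerLb
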